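/- Let n ≥ 1 and α > −1. For every fixed z ∈ T_B, ∫_{T_B} ρ(w)^α · |ρ(z,w)|^{−(n+1+α)} dV(w) = +∞; that is, the weighted Bergman kernel K_α(z,·) does not belong to L¹(T_B, dV_α). -/

import Mathlib

open MeasureTheory Complex ComplexConjugate
open scoped ENNReal

noncomputable section

/-- The tube domain `T_B ⊆ ℂ^(n+1)` (paper dimension `n+1 ≥ 1`). -/
def TB (n : ℕ) : Set (Fin (n + 1) → ℂ) :=
  {z | ∑ k : Fin n, (z k.castSucc).im ^ 2 < (z (Fin.last n)).im}

/-- `ρ(z) = y_n − |y'|²`. -/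
def rho (n : ℕ) (z : Fin (n + 1) → ℂ) : ℝ :=
  (z (Fin.last n)).im - ∑ k : Fin n, (z k.castSucc).im ^ 2

/-- `ρ(z,w) = (1/4)(Σ (z_k − conj w_k)² − 2i(z_n − conj w_n))`. -/
def rho2 (n : ℕ) (z w : Fin (n + 1) → ℂ) : ℂ :=
  (1 / 4) * ((∑ k : Fin n, (z k.castSucc - conj (w k.castSucc)) ^ 2)
    - 2 * Complex.I * (z (Fin.last n) - conj (w (Fin.last n))))

/-- The point `𝐢 = (0,…,0,i) ∈ T_B`. -/
def iPt (n : ℕ) : Fin (n + 1) → ℂ := fun j => if j = Fin.last n then Complex.I else 0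

/-- `c_α = Γ(n+1+α)/(2^(n+1) πⁿ Γ(α+1))` (paper `n` = `n+1` here). -/
def cA (n : ℕ) (α : ℝ) : ℝ :=
  Real.Gamma ((n : ℝ) + 2 + α) / (2 ^ (n + 2) * Real.pi ^ (n + 1) * Real.Gamma (α + 1))

/-- Wirtinger derivative `∂g/∂z_j = (1/2)(∂g/∂x_j − i ∂g/∂y_j)`. -/
def wdz (n : ℕ) (j : Fin (n + 1)) (g : (Fin (n + 1) → ℂ) → ℂ) : (Fin (n + 1) → ℂ) → ℂ :=
  fun z => (1 / 2) * (fderiv ℝ g z (Pi.single j 1) - Complex.I * fderiv ℝ g z (Pi.single j Complex.I))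

/-- Wirtinger derivative `∂g/∂z̄_j = (1/2)(∂g/∂x_j + i ∂g/∂y_j)`. -/
def wdzbar (n : ℕ) (j : Fin (n + 1)) (g : (Fin (n + 1) → ℂ) → ℂ) : (Fin (n + 1) → ℂ) → ℂ :=
  fun z => (1 / 2) * (fderiv ℝ g z (Pi.single j 1) + Complex.I * fderiv ℝ g z (Pi.single j Complex.I))

/-! ### Auxiliary material for the proof -/

lemma vol_reProdIm (s t : Set ℝ) (hs : MeasurableSet s) (ht : MeasurableSet t) :
    volume (s ×ℂ t) = volume s * volume t := by
  have h : s ×ℂ t = Complex.measurableEquivRealProd ⁻¹' (s ×ˢ t) := by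
    ext w
    simp [Complex.mem_reProdIm, Set.mem_prod]
  rw [h, Complex.volume_preserving_equiv_real_prod.measure_preimage
    (hs.prod ht).nullMeasurableSet, Measure.volume_eq_prod, Measure.prod_prod]

lemma meas_reProdIm (s t : Set ℝ) (hs : MeasurableSet s) (ht : MeasurableSet t) :
    MeasurableSet (s ×ℂ t) :=
  (Complex.measurable_re hs).inter (Complex.measurable_im ht)

lemma rho2_re_eq (n : ℕ) (z w : Fin (n + 1) → ℂ) :
    (rho2 n z w).re = (1/4) * ((∑ k : Fin n,
      (((z k.castSucc).re - (w k.castSucc).re)^2 - ((z k.castSucc).im + (w k.castSucc).im)^2))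
      + 2 * ((z (Fin.last n)).im + (w (Fin.last n)).im)) := by
  simp only [rho2, Complex.mul_re, Complex.sub_re, Complex.sub_im, Complex.mul_im,
    Complex.ofReal_re, Complex.re_sum, Complex.im_sum, Complex.conj_re, Complex.conj_im,
    Complex.I_re, Complex.I_im, pow_two,
    Complex.div_re, Complex.div_im, Complex.one_re, Complex.one_im, Complex.normSq_apply]
  rw [Finset.sum_sub_distrib]
  norm_num

lemma rho2_re_pos (n : ℕ) (z w : Fin (n + 1) → ℂ) (hz : z ∈ TB n) (hw : w ∈ TB n) :
    0 < (rho2 n z w).re := by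
  rw [rho2_re_eq]
  have h1 : (0:ℝ) ≤ ∑ k : Fin n, ((z k.castSucc).re - (w k.castSucc).re)^2 :=
    Finset.sum_nonneg fun k _ => sq_nonneg _
  have h2 : ∑ k : Fin n, ((z k.castSucc).im + (w k.castSucc).im)^2
      ≤ ∑ k : Fin n, (2 * (z k.castSucc).im ^2 + 2 * (w k.castSucc).im ^2) :=
    Finset.sum_le_sum fun k _ => by nlinarith [sq_nonneg ((z k.castSucc).im - (w k.castSucc).im)]
  have h3 : ∑ k : Fin n, (2 * (z k.castSucc).im ^2 + 2 * (w k.castSucc).im ^2)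
      = 2 * ∑ k : Fin n, (z k.castSucc).im ^2 + 2 * ∑ k : Fin n, (w k.castSucc).im ^2 := by
    rw [Finset.sum_add_distrib, ← Finset.mul_sum, ← Finset.mul_sum]
  have hz' : ∑ k : Fin n, (z k.castSucc).im ^ 2 < (z (Fin.last n)).im := hz
  have hw' : ∑ k : Fin n, (w k.castSucc).im ^ 2 < (w (Fin.last n)).im := hw
  rw [Finset.sum_sub_distrib]
  nlinarith [h1, h2, h3, hz', hw']

/-- The boxes at scale `3^m`. -/
def boxS (n m : ℕ) : Fin (n + 1) → Set ℂ := fun j =>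
  if j = Fin.last n then (Set.Icc (0:ℝ) (3^m)) ×ℂ (Set.Icc ((3:ℝ)^m) (2*3^m))
  else (Set.Icc (0:ℝ) (Real.sqrt (3^m))) ×ℂ (Set.Icc (0:ℝ) (Real.sqrt (3^m)/((n:ℝ)+1)))

def boxR (n m : ℕ) : Set (Fin (n + 1) → ℂ) := Set.pi Set.univ (boxS n m)

lemma boxR_meas (n m : ℕ) : MeasurableSet (boxR n m) := by
  refine MeasurableSet.univ_pi fun j => ?_
  unfold boxS
  split <;> exact meas_reProdIm _ _ measurableSet_Icc measurableSet_Icc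

lemma boxR_spec {n m : ℕ} {w : Fin (n + 1) → ℂ} (hw : w ∈ boxR n m) :
    (∀ k : Fin n, (w k.castSucc).re ∈ Set.Icc (0:ℝ) (Real.sqrt (3^m)) ∧
        (w k.castSucc).im ∈ Set.Icc (0:ℝ) (Real.sqrt (3^m)/((n:ℝ)+1)))
    ∧ (w (Fin.last n)).re ∈ Set.Icc (0:ℝ) ((3:ℝ)^m)
    ∧ (w (Fin.last n)).im ∈ Set.Icc ((3:ℝ)^m) (2*3^m) := by
  have h := Set.mem_univ_pi.mp hw
  refine ⟨fun k => ?_, ?_⟩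
  · have hk := h k.castSucc
    rw [boxS, if_neg (Fin.castSucc_lt_last k).ne] at hk
    exact Complex.mem_reProdIm.mp hk
  · have hl := h (Fin.last n)
    rw [boxS, if_pos rfl] at hl
    exact Complex.mem_reProdIm.mp hl

lemma boxR_sum_le {n m : ℕ} {w : Fin (n + 1) → ℂ} (hw : w ∈ boxR n m) :
    ∑ k : Fin n, (w k.castSucc).im ^ 2 ≤ (3:ℝ)^m / 2 := by
  have T0 : (0:ℝ) ≤ 3^m := by positivity
  have hstep : ∑ k : Fin n, (w k.castSucc).im ^ 2
      ≤ ∑ _k : Fin n, (3:ℝ)^m/((n:ℝ)+1)^2 := by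
    refine Finset.sum_le_sum fun k _ => ?_
    have h := (boxR_spec hw).1 k
    have h1 : (w k.castSucc).im ^ 2 ≤ (Real.sqrt (3^m)/((n:ℝ)+1)) ^ 2 :=
      pow_le_pow_left₀ h.2.1 h.2.2 2
    calc (w k.castSucc).im ^ 2 ≤ (Real.sqrt (3^m)/((n:ℝ)+1)) ^ 2 := h1
      _ = (3:ℝ)^m/((n:ℝ)+1)^2 := by rw [div_pow, Real.sq_sqrt T0]
  have hc : ∑ _k : Fin n, (3:ℝ)^m/((n:ℝ)+1)^2 = (n:ℝ) * ((3:ℝ)^m/((n:ℝ)+1)^2) := by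
    rw [Finset.sum_const, Finset.card_univ, Fintype.card_fin, nsmul_eq_mul]
  have hfin : (n:ℝ) * ((3:ℝ)^m/((n:ℝ)+1)^2) ≤ (3:ℝ)^m / 2 := by
    rw [mul_div_assoc', div_le_div_iff₀ (by positivity) (by norm_num)]
    nlinarith [mul_nonneg T0 (by positivity : (0:ℝ) ≤ (n:ℝ)^2 + 1)]
  linarith [hstep, hc.le, hfin]

lemma boxR_subset_TB (n m : ℕ) : boxR n m ⊆ TB n := by
  intro w hw
  have h1 := boxR_sum_le hw
  have h2 := ((boxR_spec hw).2.2).1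
  have T0 : (0:ℝ) < 3^m := by positivity
  show ∑ k : Fin n, (w k.castSucc).im ^ 2 < (w (Fin.last n)).im
  linarith

lemma boxR_rho_lb {n m : ℕ} {w : Fin (n + 1) → ℂ} (hw : w ∈ boxR n m) :
    (3:ℝ)^m / 2 ≤ rho n w := by
  have h1 := boxR_sum_le hw
  have h2 := ((boxR_spec hw).2.2).1
  unfold rho; linarith

lemma boxR_rho_ub {n m : ℕ} {w : Fin (n + 1) → ℂ} (hw : w ∈ boxR n m) :
    rho n w ≤ 2 * 3^m := by
  have h1 : (0:ℝ) ≤ ∑ k : Fin n, (w k.castSucc).im ^ 2 :=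
    Finset.sum_nonneg fun k _ => sq_nonneg _
  have h2 := ((boxR_spec hw).2.2).2
  unfold rho; linarith

lemma boxR_abs_rho2_le (n m : ℕ) (z : Fin (n + 1) → ℂ) {w : Fin (n + 1) → ℂ}
    (hw : w ∈ boxR n m) :
    ‖rho2 n z w‖ ≤ ((n:ℝ) * (‖z‖ + 2)^2 + 2*‖z‖ + 6) * 3^m := by
  set T : ℝ := (3:ℝ)^m with hTdef
  have T0 : (0:ℝ) ≤ T := by positivity
  have hT1 : (1:ℝ) ≤ T := by
    calc (1:ℝ) = 1^m := (one_pow m).symm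
      _ ≤ 3^m := pow_le_pow_left₀ (by norm_num) (by norm_num) m
  have hsq1 : (1:ℝ) ≤ Real.sqrt T := by
    rw [show (1:ℝ) = Real.sqrt 1 by simp]
    exact Real.sqrt_le_sqrt hT1
  have hM : (0:ℝ) ≤ ‖z‖ := norm_nonneg z
  have hzj : ∀ j, ‖z j‖ ≤ ‖z‖ := fun j => by
    exact norm_le_pi_norm z j
  -- bound for each coordinate k
  have hk : ∀ k : Fin n, ‖z k.castSucc - conj (w k.castSucc)‖ ≤ (‖z‖ + 2) * Real.sqrt T := by
    intro k
    have hmem := (boxR_spec hw).1 k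
    have hre : |(w k.castSucc).re| ≤ Real.sqrt T := by
      rw [_root_.abs_of_nonneg hmem.1.1]; exact hmem.1.2
    have him : |(w k.castSucc).im| ≤ Real.sqrt T := by
      rw [_root_.abs_of_nonneg hmem.2.1]
      calc (w k.castSucc).im ≤ Real.sqrt T / ((n:ℝ)+1) := hmem.2.2
        _ ≤ Real.sqrt T := div_le_self (Real.sqrt_nonneg T) (by
            have : (0:ℝ) ≤ (n:ℝ) := Nat.cast_nonneg n
            linarith)
    have habsw : ‖w k.castSucc‖ ≤ 2 * Real.sqrt T := by
      calc ‖w k.castSucc‖ ≤ |(w k.castSucc).re| + |(w k.castSucc).im| :=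
            Complex.norm_le_abs_re_add_abs_im _
        _ ≤ 2 * Real.sqrt T := by linarith
    calc ‖z k.castSucc - conj (w k.castSucc)‖
        ≤ ‖z k.castSucc‖ + ‖conj (w k.castSucc)‖ :=
          norm_sub_le _ _
      _ = ‖z k.castSucc‖ + ‖w k.castSucc‖ := by rw [Complex.norm_conj]
      _ ≤ ‖z‖ + 2 * Real.sqrt T := add_le_add (hzj _) habsw
      _ ≤ (‖z‖ + 2) * Real.sqrt T := by nlinarith
  -- bound on the sum
  have hsum : ‖∑ k : Fin n, (z k.castSucc - conj (w k.castSucc)) ^ 2‖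
      ≤ (n:ℝ) * ((‖z‖ + 2)^2 * T) := by
    calc ‖∑ k : Fin n, (z k.castSucc - conj (w k.castSucc)) ^ 2‖
        ≤ ∑ k : Fin n, ‖(z k.castSucc - conj (w k.castSucc)) ^ 2‖ :=
          norm_sum_le _ _
      _ ≤ ∑ _k : Fin n, (‖z‖ + 2)^2 * T := by
          refine Finset.sum_le_sum fun k _ => ?_
          rw [norm_pow]
          calc ‖z k.castSucc - conj (w k.castSucc)‖ ^ 2
              ≤ ((‖z‖ + 2) * Real.sqrt T) ^ 2 :=
                pow_le_pow_left₀ (norm_nonneg _) (hk k) 2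
            _ = (‖z‖ + 2)^2 * T := by rw [mul_pow, Real.sq_sqrt T0]
      _ = (n:ℝ) * ((‖z‖ + 2)^2 * T) := by
          rw [Finset.sum_const, Finset.card_univ, Fintype.card_fin, nsmul_eq_mul]
  -- bound on the last term
  have hlastmem := (boxR_spec hw).2
  have hlast : ‖2 * Complex.I * (z (Fin.last n) - conj (w (Fin.last n)))‖
      ≤ (2*‖z‖ + 6) * T := by
    have habsw : ‖w (Fin.last n)‖ ≤ 3 * T := by
      calc ‖w (Fin.last n)‖
          ≤ |(w (Fin.last n)).re| + |(w (Fin.last n)).im| := Complex.norm_le_abs_re_add_abs_im _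
        _ ≤ T + 2*T := by
            have h1 : |(w (Fin.last n)).re| ≤ T := by
              rw [_root_.abs_of_nonneg hlastmem.1.1]; exact hlastmem.1.2
            have h2 : |(w (Fin.last n)).im| ≤ 2*T := by
              rw [_root_.abs_of_nonneg (le_trans (by positivity) hlastmem.2.1)]
              exact hlastmem.2.2
            linarith
        _ = 3 * T := by ring
    have h3 : ‖z (Fin.last n) - conj (w (Fin.last n))‖ ≤ ‖z‖ + 3*T := by
      calc ‖z (Fin.last n) - conj (w (Fin.last n))‖
          ≤ ‖z (Fin.last n)‖ + ‖conj (w (Fin.last n))‖ :=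
            norm_sub_le _ _
        _ = ‖z (Fin.last n)‖ + ‖w (Fin.last n)‖ := by
            rw [Complex.norm_conj]
        _ ≤ ‖z‖ + 3*T := add_le_add (hzj _) habsw
    calc ‖2 * Complex.I * (z (Fin.last n) - conj (w (Fin.last n)))‖
        = 2 * ‖z (Fin.last n) - conj (w (Fin.last n))‖ := by
          simp [map_mul]
      _ ≤ 2 * (‖z‖ + 3*T) := by linarith
      _ ≤ (2*‖z‖ + 6) * T := by nlinarith
  -- combine
  have hX : ‖(∑ k : Fin n, (z k.castSucc - conj (w k.castSucc)) ^ 2)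
      - 2 * Complex.I * (z (Fin.last n) - conj (w (Fin.last n)))‖
      ≤ ((n:ℝ) * (‖z‖ + 2)^2 + 2*‖z‖ + 6) * T := by
    calc ‖(∑ k : Fin n, (z k.castSucc - conj (w k.castSucc)) ^ 2)
          - 2 * Complex.I * (z (Fin.last n) - conj (w (Fin.last n)))‖
        ≤ ‖∑ k : Fin n, (z k.castSucc - conj (w k.castSucc)) ^ 2‖
          + ‖2 * Complex.I * (z (Fin.last n) - conj (w (Fin.last n)))‖ :=
          norm_sub_le _ _
      _ ≤ (n:ℝ) * ((‖z‖ + 2)^2 * T) + (2*‖z‖ + 6) * T := add_le_add hsum hlast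
      _ = ((n:ℝ) * (‖z‖ + 2)^2 + 2*‖z‖ + 6) * T := by ring
  calc ‖rho2 n z w‖
      = (1/4) * ‖(∑ k : Fin n, (z k.castSucc - conj (w k.castSucc)) ^ 2)
        - 2 * Complex.I * (z (Fin.last n) - conj (w (Fin.last n)))‖ := by
        rw [rho2, norm_mul]; norm_num
    _ ≤ ‖(∑ k : Fin n, (z k.castSucc - conj (w k.castSucc)) ^ 2)
        - 2 * Complex.I * (z (Fin.last n) - conj (w (Fin.last n)))‖ := by
        have := norm_nonneg ((∑ k : Fin n, (z k.castSucc - conj (w k.castSucc)) ^ 2)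
          - 2 * Complex.I * (z (Fin.last n) - conj (w (Fin.last n))))
        linarith
    _ ≤ ((n:ℝ) * (‖z‖ + 2)^2 + 2*‖z‖ + 6) * T := hX

lemma boxR_volume (n m : ℕ) :
    volume (boxR n m) = ENNReal.ofReal (((3:ℝ)^m)^(n+2) / ((n:ℝ)+1)^n) := by
  have T0 : (0:ℝ) ≤ 3^m := by positivity
  have hstep : volume (boxR n m) = (∏ k : Fin n, volume (boxS n m k.castSucc))
      * volume (boxS n m (Fin.last n)) := by
    rw [boxR, volume_pi_pi, Fin.prod_univ_castSucc]
  rw [hstep]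
  have hk : ∀ k : Fin n, volume (boxS n m k.castSucc)
      = ENNReal.ofReal (Real.sqrt (3^m) * (Real.sqrt (3^m) / ((n:ℝ)+1))) := by
    intro k
    rw [boxS, if_neg (Fin.castSucc_lt_last k).ne,
      vol_reProdIm _ _ measurableSet_Icc measurableSet_Icc, Real.volume_Icc, Real.volume_Icc,
      sub_zero, sub_zero, ← ENNReal.ofReal_mul (Real.sqrt_nonneg _)]
  have h2T : 2*(3:ℝ)^m - 3^m = 3^m := by ring
  have hlast : volume (boxS n m (Fin.last n)) = ENNReal.ofReal ((3:ℝ)^m * 3^m) := by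
    rw [boxS, if_pos rfl, vol_reProdIm _ _ measurableSet_Icc measurableSet_Icc,
      Real.volume_Icc, Real.volume_Icc, sub_zero, h2T, ← ENNReal.ofReal_mul T0]
  rw [hlast, Finset.prod_congr rfl (fun k _ => hk k), Finset.prod_const, Finset.card_univ,
    Fintype.card_fin, ← ENNReal.ofReal_pow (by positivity), ← ENNReal.ofReal_mul (by positivity)]
  congr 1
  rw [mul_div_assoc', Real.mul_self_sqrt T0, div_pow]
  have hne : ((n:ℝ)+1)^n ≠ 0 := by positivity
  field_simp
  ring

lemma boxR_disjoint (n : ℕ) : Pairwise (Function.onFun Disjoint (boxR n)) := by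
  have key : ∀ i j : ℕ, i < j → Disjoint (boxR n i) (boxR n j) := by
    intro i j hij
    rw [Set.disjoint_left]
    intro w hwi hwj
    have h1 := ((boxR_spec hwi).2.2).2
    have h2 := ((boxR_spec hwj).2.2).1
    have h3 : (3:ℝ)^(i+1) ≤ 3^j := pow_le_pow_right₀ (by norm_num) (by omega)
    have h4 : (3:ℝ)^(i+1) = 3 * 3^i := by rw [pow_succ]; ring
    have h5 : (0:ℝ) < 3^i := by positivity
    linarith
  intro i j hne
  rcases hne.lt_or_gt with h | h
  · exact key _ _ h
  · exact (key _ _ h).symm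

theorem stmt18 (n : ℕ) (α : ℝ) (hα : -1 < α) (z : Fin (n + 1) → ℂ) (hz : z ∈ TB n) :
    ∫⁻ w in TB n,
        ENNReal.ofReal (rho n w ^ α * ‖rho2 n z w‖ ^ (-((n : ℝ) + 2 + α))) = ⊤ := by
  classical
  set f : (Fin (n + 1) → ℂ) → ℝ≥0∞ := fun w =>
    ENNReal.ofReal (rho n w ^ α * ‖rho2 n z w‖ ^ (-((n : ℝ) + 2 + α))) with hfdef
  set C : ℝ := (n:ℝ) * (‖z‖ + 2)^2 + 2*‖z‖ + 6 with hCdef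
  have hC : 0 < C := by positivity
  have hs0 : 0 < (n : ℝ) + 2 + α := by
    have : (0:ℝ) ≤ (n:ℝ) := Nat.cast_nonneg n
    linarith
  set κ : ℝ := (2:ℝ) ^ (-|α|) * C ^ (-((n : ℝ) + 2 + α)) with hκdef
  have hκ : 0 < κ := by
    apply mul_pos (Real.rpow_pos_of_pos (by norm_num) _) (Real.rpow_pos_of_pos hC _)
  set ε : ℝ≥0∞ := ENNReal.ofReal (κ / ((n:ℝ)+1)^n) with hεdef
  have hεne : ε ≠ 0 := by
    rw [hεdef]
    exact (ENNReal.ofReal_pos.mpr (by positivity)).ne'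
  -- the per-box lower bound
  have key : ∀ m : ℕ, ε ≤ ∫⁻ w in boxR n m, f w := by
    intro m
    set T : ℝ := (3:ℝ)^m with hTdef
    have T0 : (0:ℝ) < T := by positivity
    have hT1 : (1:ℝ) ≤ T := by
      calc (1:ℝ) = 1^m := (one_pow m).symm
        _ ≤ 3^m := pow_le_pow_left₀ (by norm_num) (by norm_num) m
    -- pointwise bound on the box
    have hpt : ∀ w ∈ boxR n m, ENNReal.ofReal (κ * T ^ (-((n:ℝ)+2))) ≤ f w := by
      intro w hw
      have hwTB : w ∈ TB n := boxR_subset_TB n m hw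
      have hρlb : T / 2 ≤ rho n w := boxR_rho_lb hw
      have hρub : rho n w ≤ 2 * T := boxR_rho_ub hw
      have hρpos : 0 < rho n w := by linarith
      have habs_ub : ‖rho2 n z w‖ ≤ C * T := boxR_abs_rho2_le n m z hw
      have habs_pos : 0 < ‖rho2 n z w‖ :=
        lt_of_lt_of_le (rho2_re_pos n z w hz hwTB) (Complex.re_le_norm _)
      -- lower bound on rho^α
      have h1 : T ^ α * (2:ℝ) ^ (-|α|) ≤ rho n w ^ α := by
        rcases le_or_gt 0 α with hα0 | hα0
        · rw [_root_.abs_of_nonneg hα0]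
          have hstep : T ^ α * (2:ℝ) ^ (-α) = (T / 2) ^ α := by
            rw [Real.div_rpow T0.le (by norm_num), Real.rpow_neg (by norm_num), div_eq_mul_inv]
          rw [hstep]
          exact Real.rpow_le_rpow (by positivity) hρlb hα0
        · rw [abs_of_neg hα0, neg_neg]
          have hstep : T ^ α * (2:ℝ) ^ α = (2 * T) ^ α := by
            rw [Real.mul_rpow (by norm_num) T0.le]; ring
          rw [hstep]
          exact Real.rpow_le_rpow_of_nonpos hρpos hρub hα0.le
      -- lower bound on |rho2|^(-s)
      have h2 : (C * T) ^ (-((n : ℝ) + 2 + α)) ≤ ‖rho2 n z w‖ ^ (-((n : ℝ) + 2 + α)) :=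
        Real.rpow_le_rpow_of_nonpos habs_pos habs_ub (neg_nonpos.mpr hs0.le)
      have heq : κ * T ^ (-((n:ℝ)+2))
          = (T ^ α * (2:ℝ) ^ (-|α|)) * ((C * T) ^ (-((n : ℝ) + 2 + α))) := by
        rw [Real.mul_rpow hC.le T0.le]
        have hTT : T ^ α * T ^ (-((n : ℝ) + 2 + α)) = T ^ (-((n:ℝ)+2)) := by
          rw [← Real.rpow_add T0]
          congr 1
          ring
        calc κ * T ^ (-((n:ℝ)+2))
            = (2:ℝ) ^ (-|α|) * C ^ (-((n : ℝ) + 2 + α)) * (T ^ α * T ^ (-((n : ℝ) + 2 + α))) := by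
              rw [hTT, hκdef]
          _ = (T ^ α * (2:ℝ) ^ (-|α|)) * (C ^ (-((n : ℝ) + 2 + α)) * T ^ (-((n : ℝ) + 2 + α))) := by
              ring
      apply ENNReal.ofReal_le_ofReal
      rw [heq]
      exact mul_le_mul h1 h2 (Real.rpow_nonneg (by positivity) _)
        (Real.rpow_nonneg hρpos.le _)
    -- volume computation
    have hεeq : ε = ENNReal.ofReal (κ * T ^ (-((n:ℝ)+2))) * volume (boxR n m) := by
      rw [hεdef, boxR_volume n m, ← hTdef, ← ENNReal.ofReal_mul (by positivity)]
      congr 1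
      have hcast : -((n:ℝ)+2) = -(((n+2 : ℕ)):ℝ) := by push_cast; ring
      rw [hcast, Real.rpow_neg T0.le, Real.rpow_natCast]
      have hTne : T ^ (n+2) ≠ 0 := by positivity
      have hne : ((n:ℝ)+1)^n ≠ 0 := by positivity
      field_simp
    calc ε = ENNReal.ofReal (κ * T ^ (-((n:ℝ)+2))) * volume (boxR n m) := hεeq
      _ = ∫⁻ _ in boxR n m, ENNReal.ofReal (κ * T ^ (-((n:ℝ)+2))) := by
          rw [setLIntegral_const]
      _ ≤ ∫⁻ w in boxR n m, f w := setLIntegral_mono' (boxR_meas n m) hpt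
  -- assembling
  have hsub : (⋃ m, boxR n m) ⊆ TB n := Set.iUnion_subset fun m => boxR_subset_TB n m
  have htop : (⊤:ℝ≥0∞) ≤ ∫⁻ w in TB n, f w := by
    calc (⊤:ℝ≥0∞) = ∑' _ : ℕ, ε := (ENNReal.tsum_const_eq_top_of_ne_zero hεne).symm
      _ ≤ ∑' m : ℕ, ∫⁻ w in boxR n m, f w := ENNReal.tsum_le_tsum key
      _ = ∫⁻ w in ⋃ m, boxR n m, f w :=
          (lintegral_iUnion (fun m => boxR_meas n m) (boxR_disjoint n) f).symm
      _ ≤ ∫⁻ w in TB n, f w := lintegral_mono_set hsub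
  exact top_le_iff.mp htop
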